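/- Let φ : [0,1] → ℝ be ℓ-times continuously differentiable on (0,1) with ℓth divergence speed p^α, i.e., there exist constants W_ℓ > 0, c_ℓ ≥ 0, c'_ℓ ≥ 0 such that W_ℓ p^{α-ℓ} - c'_ℓ ≤ |φ^{(ℓ)}(p)| ≤ W_ℓ p^{α-ℓ} + c_ℓ for all p ∈ (0,1). If ℓ > 1 + α, then the (ℓ-1)th divergence speed of φ is also p^α: there exist constants W_{ℓ-1} > 0, c_{ℓ-1} ≥ 0, c'_{ℓ-1} ≥ 0 with W_{ℓ-1} p^{α-(ℓ-1)} - c'_{ℓ-1} ≤ |φ^{(ℓ-1)}(p)| ≤ W_{ℓ-1} p^{α-(ℓ-1)} + c_{ℓ-1} for all p ∈ (0,1). -/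

import Mathlib

open Set intervalIntegral MeasureTheory

lemma aux_ii {r : ℝ} {a b : ℝ} (ha : 0 < a) (hab : a ≤ b) :
    IntervalIntegrable (fun t : ℝ => t ^ r) volume a b := by
  apply intervalIntegral.intervalIntegrable_rpow
  right
  rw [Set.uIcc_of_le hab]
  rintro ⟨h0, -⟩; linarith

lemma aux_affii {W c r : ℝ} {a b : ℝ} (ha : 0 < a) (hab : a ≤ b) :
    IntervalIntegrable (fun t : ℝ => W * t ^ r + c) volume a b :=
  ((aux_ii ha hab).const_mul W).add intervalIntegrable_const

lemma aux_int {W c r : ℝ} (hr : r ≠ -1) {a b : ℝ} (ha : 0 < a) (hab : a ≤ b) :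
    ∫ t in a..b, (W * t ^ r + c) = W * ((b ^ (r+1) - a ^ (r+1)) / (r+1)) + c * (b - a) := by
  rw [intervalIntegral.integral_add ((aux_ii ha hab).const_mul W) (intervalIntegrable_const),
    intervalIntegral.integral_const_mul, integral_rpow (Or.inr ⟨hr, by
      rw [Set.uIcc_of_le hab]; rintro ⟨h0, -⟩; linarith⟩),
    intervalIntegral.integral_const, smul_eq_mul, mul_comm (b-a)]

lemma aux_alg {x A B : ℝ} (hx : x ≠ 0) (W : ℝ) : W * ((B - A)/x) = (W / -x) * (A - B) := by
  have hx' : -x ≠ 0 := neg_ne_zero.mpr hx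
  field_simp
  ring

theorem divergence_speed_lower_order (ℓ : ℕ) (α : ℝ) (hℓα : 1 + α < (ℓ : ℝ))
    (φ : ℝ → ℝ) (hφ : ContDiffOn ℝ ℓ φ (Set.Ioo 0 1))
    (W c c' : ℝ) (hW : 0 < W) (hc : 0 ≤ c) (hc' : 0 ≤ c')
    (hub : ∀ p ∈ Set.Ioo (0:ℝ) 1,
      |iteratedDerivWithin ℓ φ (Set.Ioo 0 1) p| ≤ W * p ^ (α - ℓ) + c)
    (hlb : ∀ p ∈ Set.Ioo (0:ℝ) 1,
      W * p ^ (α - ℓ) - c' ≤ |iteratedDerivWithin ℓ φ (Set.Ioo 0 1) p|) :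
    ∃ W₁ c₁ c₁' : ℝ, 0 < W₁ ∧ 0 ≤ c₁ ∧ 0 ≤ c₁' ∧
      ∀ p ∈ Set.Ioo (0:ℝ) 1,
        W₁ * p ^ (α - ((ℓ - 1 : ℕ) : ℝ)) - c₁'
            ≤ |iteratedDerivWithin (ℓ - 1) φ (Set.Ioo 0 1) p| ∧
        |iteratedDerivWithin (ℓ - 1) φ (Set.Ioo 0 1) p|
            ≤ W₁ * p ^ (α - ((ℓ - 1 : ℕ) : ℝ)) + c₁ := by
  obtain _ | n := ℓ
  · exact ⟨W, c, c', hW, hc, hc', fun p hp => ⟨hlb p hp, hub p hp⟩⟩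
  -- main case ℓ = n + 1
  simp only [Nat.add_sub_cancel]
  set s : Set ℝ := Set.Ioo 0 1 with hs_def
  have hs : IsOpen s := isOpen_Ioo
  have hu : UniqueDiffOn ℝ s := hs.uniqueDiffOn
  set f : ℝ → ℝ := iteratedDerivWithin n φ s with hf_def
  set g : ℝ → ℝ := iteratedDerivWithin (n+1) φ s with hg_def
  obtain ⟨r, hr_def⟩ : ∃ r : ℝ, r = α - ((n:ℝ)+1) := ⟨_, rfl⟩
  have hcast : α - ((n+1 : ℕ) : ℝ) = r := by push_cast [hr_def]; ring
  rw [hcast] at hub hlb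
  have hr1 : r + 1 < 0 := by push_cast at hℓα; rw [hr_def]; linarith
  have hrne : r ≠ -1 := by intro h; rw [h] at hr1; norm_num at hr1
  have hne : r + 1 ≠ 0 := ne_of_lt hr1
  have hrneg : r < 0 := by linarith
  have hr0 : r ≠ 0 := ne_of_lt hrneg
  obtain ⟨W₁, hW₁_def⟩ : ∃ x : ℝ, x = W / -(r+1) := ⟨_, rfl⟩
  have hW₁ : 0 < W₁ := by rw [hW₁_def]; exact div_pos hW (by linarith)
  have hexp : α - (n:ℝ) = r + 1 := by rw [hr_def]; ring
  have halg : ∀ A B : ℝ, W * ((B - A)/(r+1)) = W₁ * (A - B) := by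
    intro A B; rw [hW₁_def]; exact aux_alg hne W
  have hInt : ∀ (C a b : ℝ), 0 < a → a ≤ b →
      ∫ t in a..b, (W * t ^ r + C) = W₁ * (a^(r+1) - b^(r+1)) + C*(b-a) := by
    intro C a b ha hab
    rw [aux_int hrne ha hab, halg]
  -- continuity and derivatives
  have hfc : ContinuousOn f s := hφ.continuousOn_iteratedDerivWithin
    (by exact_mod_cast Nat.le_succ n) hu
  have hgc : ContinuousOn g s := hφ.continuousOn_iteratedDerivWithin le_rfl hu
  have hdf : ∀ p ∈ s, HasDerivAt f (g p) p := by
    intro p hp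
    have h1 : DifferentiableWithinAt ℝ f s p :=
      hφ.differentiableOn_iteratedDerivWithin (by exact_mod_cast Nat.lt_succ_self n) hu p hp
    have h2 : DifferentiableAt ℝ f p := h1.differentiableAt (hs.mem_nhds hp)
    have h3 : g p = deriv f p := by
      rw [hg_def, iteratedDerivWithin_succ, ← hf_def, derivWithin_of_isOpen hs hp]
    rw [h3]; exact h2.hasDerivAt
  have hsub : ∀ {a b : ℝ}, a ∈ s → b ∈ s → a ≤ b → Set.Icc a b ⊆ s := by
    rintro a b ha hb hab t ⟨ht1, ht2⟩
    exact ⟨lt_of_lt_of_le ha.1 ht1, lt_of_le_of_lt ht2 hb.2⟩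
  have hgi : ∀ {a b : ℝ}, a ∈ s → b ∈ s → a ≤ b → IntervalIntegrable g volume a b := by
    intro a b ha hb hab
    apply ContinuousOn.intervalIntegrable
    rw [Set.uIcc_of_le hab]
    exact hgc.mono (hsub ha hb hab)
  have key : ∀ {a b : ℝ}, a ∈ s → b ∈ s → a ≤ b → f b - f a = ∫ t in a..b, g t := by
    intro a b ha hb hab
    refine (intervalIntegral.integral_eq_sub_of_hasDerivAt ?_ (hgi ha hb hab)).symm
    intro t ht
    rw [Set.uIcc_of_le hab] at ht
    exact hdf t (hsub ha hb hab ht)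
  have hhs : (1/2 : ℝ) ∈ s := by constructor <;> norm_num
  obtain ⟨H, hH_def⟩ : ∃ x : ℝ, x = (1/2 : ℝ) ^ (r+1) := ⟨_, rfl⟩
  have hH0 : 0 ≤ H := by rw [hH_def]; exact Real.rpow_nonneg (by norm_num) _
  obtain ⟨c₁, hc₁_def⟩ : ∃ x : ℝ, x = |f (1/2)| + c + W₁ * H := ⟨_, rfl⟩
  have hc₁ : 0 ≤ c₁ := by
    have h1 := abs_nonneg (f (1/2))
    have h2 := mul_nonneg hW₁.le hH0
    rw [hc₁_def]; linarith
  -- upper bound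
  have upper : ∀ p ∈ s, |f p| ≤ W₁ * p ^ (r+1) + c₁ := by
    intro p hp
    have hp0 := hp.1
    have hp1 := hp.2
    have hprpos : (0:ℝ) ≤ p ^ (r+1) := Real.rpow_nonneg hp0.le (r+1)
    have hWp : 0 ≤ W₁ * p ^ (r+1) := mul_nonneg hW₁.le hprpos
    have hWH : 0 ≤ W₁ * H := mul_nonneg hW₁.le hH0
    rcases le_total p (1/2) with hple | hpge
    · have e1 := key hp hhs hple
      have e2 : |∫ t in p..(1/2:ℝ), g t| ≤ ∫ t in p..(1/2:ℝ), |g t| :=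
        intervalIntegral.abs_integral_le_integral_abs hple
      have e3 : (∫ t in p..(1/2:ℝ), |g t|) ≤ ∫ t in p..(1/2:ℝ), (W * t ^ r + c) := by
        apply intervalIntegral.integral_mono_on hple ((hgi hp hhs hple).abs)
          (aux_affii hp0 hple)
        intro t ht
        exact hub t (hsub hp hhs hple ht)
      rw [hInt c p (1/2) hp0 hple, ← hH_def] at e3
      have e5 : |f p| - |f (1/2)| ≤ |f (1/2) - f p| := by
        have := abs_sub_abs_le_abs_sub (f p) (f (1/2))
        rw [abs_sub_comm] at this; linarith
      rw [e1] at e5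
      have e6 : c * (1/2 - p) ≤ c * 1 :=
        mul_le_mul_of_nonneg_left (by linarith) hc
      rw [hc₁_def]; linarith [le_trans e2 e3]
    · have e1 := key hhs hp hpge
      have e2 : |∫ t in (1/2:ℝ)..p, g t| ≤ ∫ t in (1/2:ℝ)..p, |g t| :=
        intervalIntegral.abs_integral_le_integral_abs hpge
      have e3 : (∫ t in (1/2:ℝ)..p, |g t|) ≤ ∫ t in (1/2:ℝ)..p, (W * t ^ r + c) := by
        apply intervalIntegral.integral_mono_on hpge ((hgi hhs hp hpge).abs)
          (aux_affii (by norm_num) hpge)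
        intro t ht
        exact hub t (hsub hhs hp hpge ht)
      rw [hInt c (1/2) p (by norm_num) hpge, ← hH_def] at e3
      have e5 : |f p| - |f (1/2)| ≤ |f p - f (1/2)| :=
        abs_sub_abs_le_abs_sub _ _
      rw [e1] at e5
      have e6 : c * (p - 1/2) ≤ c * 1 :=
        mul_le_mul_of_nonneg_left (by linarith) hc
      rw [hc₁_def]; linarith [le_trans e2 e3]
  -- choose δ
  obtain ⟨E, hE_def⟩ : ∃ x : ℝ, x = ((W + c') / W) ^ (1/r) := ⟨_, rfl⟩
  have hbase : (0:ℝ) < (W + c') / W := div_pos (by linarith) hW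
  have hE : 0 < E := by rw [hE_def]; exact Real.rpow_pos_of_pos hbase _
  obtain ⟨δ, hδ_def⟩ : ∃ x : ℝ, x = min (1/2) E := ⟨_, rfl⟩
  have hδ0 : 0 < δ := by rw [hδ_def]; exact lt_min (by norm_num) hE
  have hδhalf : δ ≤ 1/2 := by rw [hδ_def]; exact min_le_left _ _
  have hδE : δ ≤ E := by rw [hδ_def]; exact min_le_right _ _
  have hδs : δ ∈ s := ⟨hδ0, by linarith⟩
  have hsmall : ∀ x : ℝ, 0 < x → x ≤ δ → W ≤ W * x ^ r - c' := by
    intro x hx hxδ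
    have h1 : E ^ r ≤ x ^ r :=
      Real.rpow_le_rpow_of_nonpos hx (le_trans hxδ hδE) hrneg.le
    have h2 : E ^ r = (W + c') / W := by
      rw [hE_def, ← Real.rpow_mul hbase.le, one_div, inv_mul_cancel₀ hr0, Real.rpow_one]
    rw [h2, div_le_iff₀ hW] at h1
    nlinarith
  have hgne : ∀ x : ℝ, 0 < x → x ≤ δ → g x ≠ 0 := by
    intro x hx hxδ h0
    have hxs : x ∈ s := ⟨hx, by linarith⟩
    have h1 := hlb x hxs
    have h2 := hsmall x hx hxδ
    rw [h0, abs_zero] at h1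
    linarith
  -- integral lower bound on |f δ - f p|
  have hIabs : ∀ p : ℝ, 0 < p → p ≤ δ →
      (∫ t in p..δ, (W * t ^ r + (-c'))) ≤ |f δ - f p| := by
    intro p hp0 hpδ
    have hps : p ∈ s := ⟨hp0, by linarith⟩
    have e1 := key hps hδs hpδ
    rw [e1]
    rcases (hgne δ hδ0 le_rfl).lt_or_gt with hneg | hpos
    · -- g < 0 on [p, δ]
      have hsign : ∀ t ∈ Set.Icc p δ, g t < 0 := by
        rintro t ⟨ht1, ht2⟩
        have ht0 : 0 < t := lt_of_lt_of_le hp0 ht1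
        rcases (hgne t ht0 ht2).lt_or_gt with h | h
        · exact h
        · exfalso
          have hts : t ∈ s := ⟨ht0, by linarith [ht2]⟩
          have hiv : Set.Icc (g δ) (g t) ⊆ g '' Set.Icc t δ :=
            intermediate_value_Icc' ht2 (hgc.mono (hsub hts hδs ht2))
          obtain ⟨y, hy, hgy⟩ := hiv ⟨hneg.le, h.le⟩
          exact hgne y (lt_of_lt_of_le ht0 hy.1) hy.2 hgy
      have hcmp : (∫ t in p..δ, (W * t ^ r + (-c'))) ≤ ∫ t in p..δ, (-g t) := by
        apply intervalIntegral.integral_mono_on hpδ (aux_affii hp0 hpδ)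
          ((hgi hps hδs hpδ).neg)
        intro t ht
        have h1 := hlb t (hsub hps hδs hpδ ht)
        rw [abs_of_neg (hsign t ht)] at h1
        show W * t ^ r + -c' ≤ -g t
        linarith
      rw [intervalIntegral.integral_neg] at hcmp
      calc (∫ t in p..δ, (W * t ^ r + (-c'))) ≤ -∫ t in p..δ, g t := hcmp
        _ ≤ |∫ t in p..δ, g t| := neg_le_abs _
    · -- g > 0 on [p, δ]
      have hsign : ∀ t ∈ Set.Icc p δ, 0 < g t := by
        rintro t ⟨ht1, ht2⟩
        have ht0 : 0 < t := lt_of_lt_of_le hp0 ht1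
        rcases (hgne t ht0 ht2).lt_or_gt with h | h
        · exfalso
          have hts : t ∈ s := ⟨ht0, by linarith [ht2]⟩
          have hiv : Set.Icc (g t) (g δ) ⊆ g '' Set.Icc t δ :=
            intermediate_value_Icc ht2 (hgc.mono (hsub hts hδs ht2))
          obtain ⟨y, hy, hgy⟩ := hiv ⟨h.le, hpos.le⟩
          exact hgne y (lt_of_lt_of_le ht0 hy.1) hy.2 hgy
        · exact h
      have hcmp : (∫ t in p..δ, (W * t ^ r + (-c'))) ≤ ∫ t in p..δ, g t := by
        apply intervalIntegral.integral_mono_on hpδ (aux_affii hp0 hpδ)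
          (hgi hps hδs hpδ)
        intro t ht
        have h1 := hlb t (hsub hps hδs hpδ ht)
        rw [abs_of_pos (hsign t ht)] at h1
        show W * t ^ r + -c' ≤ g t
        linarith
      calc (∫ t in p..δ, (W * t ^ r + (-c'))) ≤ ∫ t in p..δ, g t := hcmp
        _ ≤ |∫ t in p..δ, g t| := le_abs_self _
  obtain ⟨D, hD_def⟩ : ∃ x : ℝ, x = δ ^ (r+1) := ⟨_, rfl⟩
  have hD0 : 0 ≤ D := by rw [hD_def]; exact Real.rpow_nonneg hδ0.le _
  obtain ⟨c₁', hc₁'_def⟩ : ∃ x : ℝ, x = W₁ * D + c' + |f δ| := ⟨_, rfl⟩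
  have hc₁' : 0 ≤ c₁' := by
    have h1 := abs_nonneg (f δ)
    have h2 := mul_nonneg hW₁.le hD0
    rw [hc₁'_def]; linarith
  -- lower bound
  have lower : ∀ p ∈ s, W₁ * p ^ (r+1) - c₁' ≤ |f p| := by
    intro p hp
    have hp0 := hp.1
    have hprpos : (0:ℝ) ≤ p ^ (r+1) := Real.rpow_nonneg hp0.le (r+1)
    rcases le_total p δ with hpδ | hδp
    · have e1 := hIabs p hp0 hpδ
      rw [hInt (-c') p δ hp0 hpδ, ← hD_def] at e1
      have e2 : |f δ - f p| - |f δ| ≤ |f p| := by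
        have h := abs_sub_abs_le_abs_sub (f δ - f p) (f δ)
        have h2 : f δ - f p - f δ = -f p := by ring
        rw [h2, abs_neg] at h
        exact h
      have e3 : c' * (δ - p) ≤ c' * 1 := mul_le_mul_of_nonneg_left (by linarith) hc'
      rw [hc₁'_def]; linarith
    · have hmono : p ^ (r+1) ≤ D := by
        rw [hD_def]
        exact Real.rpow_le_rpow_of_nonpos hδ0 hδp hr1.le
      have h1 : W₁ * p ^ (r+1) ≤ W₁ * D := mul_le_mul_of_nonneg_left hmono hW₁.le
      have h2 := abs_nonneg (f p)
      have h3 := abs_nonneg (f δ)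
      rw [hc₁'_def]; linarith
  exact ⟨W₁, c₁, c₁', hW₁, hc₁, hc₁', fun p hp => by
    rw [hexp]; exact ⟨lower p hp, upper p hp⟩⟩
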